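/- Suppose |ρ| < 1, v ∈ ℝ² \ {0}, and ρ − (1−ρ²)v₂/|v|² ≥ 1. Set λ = |v|²/(|v|² − (1−ρ)v₂) and ψ = (|v|² + ρv₂)/v₂. Then v₂ < 0, 0 < λ < 1, −1 ≤ ψ < ρ, the identity (ρ, v, v) = λ(1, v/λ, v/λ) + (1−λ)(ψ, 0, 0) holds, and (1, v/λ, v/λ) − (ψ, 0, 0) = (1−ψ, v/λ, v/λ) lies in Λ, i.e. |v/λ|² + (1−ψ)(v₂/λ) = 0. -/
import Mathlib


open MeasureTheory

noncomputable section

/-- Euclidean dot product on ℝ². -/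
def dot (a b : ℝ × ℝ) : ℝ := a.1 * b.1 + a.2 * b.2

/-- Rotation by 90°: (a,b)⊥ = (−b, a). -/
def perp (a : ℝ × ℝ) : ℝ × ℝ := (-a.2, a.1)

/-- Euclidean norm on ℝ². -/
def nrm (a : ℝ × ℝ) : ℝ := Real.sqrt (a.1 ^ 2 + a.2 ^ 2)

/-- State space ℝ × ℝ² × ℝ² of (ρ, v, m). -/
abbrev Pt := ℝ × (ℝ × ℝ) × (ℝ × ℝ)

/-- The wave cone Λ of stationary IPM. -/
def Lam : Set Pt :=
  {z | dot z.2.1 z.2.1 + z.1 * z.2.1.2 = 0 ∧ dot z.2.2 (perp z.2.1) = 0 ∧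
       dot z.2.2 (z.2.1 + (0, z.1)) = 0}

/-- The constitutive set K. -/
def Kset : Set Pt := {z | |z.1| = 1 ∧ z.2.2 = z.1 • z.2.1}

def G2 (z : Pt) : ℝ := dot z.2.2 (perp z.2.1)

def G3 (z : Pt) : ℝ :=
  -dot (z.2.1 - z.2.2) (z.2.1 + (0, 1 + z.1)) + dot (z.2.1 - z.2.2) (z.2.1 - z.2.2) / 2

def G4 (z : Pt) : ℝ :=
  -dot (z.2.1 + z.2.2) (z.2.1 - (0, 1 - z.1)) + dot (z.2.1 + z.2.2) (z.2.1 + z.2.2) / 2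

theorem stmt11 (ρ : ℝ) (v : ℝ × ℝ) (hρ : |ρ| < 1) (hv : v ≠ 0)
    (hcone : ρ - (1 - ρ ^ 2) * v.2 / dot v v ≥ 1) :
    v.2 < 0 ∧
    (0 < dot v v / (dot v v - (1 - ρ) * v.2) ∧ dot v v / (dot v v - (1 - ρ) * v.2) < 1) ∧
    (-1 ≤ (dot v v + ρ * v.2) / v.2 ∧ (dot v v + ρ * v.2) / v.2 < ρ) ∧
    (((ρ, v, v) : Pt) =
      (dot v v / (dot v v - (1 - ρ) * v.2)) •
          ((1 : ℝ), (dot v v / (dot v v - (1 - ρ) * v.2))⁻¹ • v,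
            (dot v v / (dot v v - (1 - ρ) * v.2))⁻¹ • v) +
        (1 - dot v v / (dot v v - (1 - ρ) * v.2)) •
          (((dot v v + ρ * v.2) / v.2 : ℝ), (0 : ℝ × ℝ), (0 : ℝ × ℝ))) ∧
    dot ((dot v v / (dot v v - (1 - ρ) * v.2))⁻¹ • v)
          ((dot v v / (dot v v - (1 - ρ) * v.2))⁻¹ • v) +
        (1 - (dot v v + ρ * v.2) / v.2) * (v.2 / (dot v v / (dot v v - (1 - ρ) * v.2))) = 0 := by
  have hρ1 : -1 < ρ := (abs_lt.mp hρ).1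
  have hρ2 : ρ < 1 := (abs_lt.mp hρ).2
  have hD : 0 < dot v v := by
    have h : v.1 ≠ 0 ∨ v.2 ≠ 0 := by
      by_contra hc
      push_neg at hc
      exact hv (Prod.ext hc.1 hc.2)
    unfold dot
    rcases h with h | h <;>
      nlinarith [mul_self_pos.mpr h, mul_self_nonneg v.1, mul_self_nonneg v.2]
  set D := dot v v with hDdef
  have hkey : D + (1 + ρ) * v.2 ≤ 0 := by
    have h1 : ρ - 1 ≥ (1 - ρ ^ 2) * v.2 / D := by linarith [hcone]
    have h2 : (ρ - 1) * D ≥ (1 - ρ ^ 2) * v.2 := by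
      have := (div_le_iff₀ hD).mp h1.le
      linarith
    nlinarith
  have hv2 : v.2 < 0 := by nlinarith
  have hden : 0 < D - (1 - ρ) * v.2 := by nlinarith
  have hdenne : D - (1 - ρ) * v.2 ≠ 0 := ne_of_gt hden
  have hDne : D ≠ 0 := ne_of_gt hD
  have hv2ne : v.2 ≠ 0 := ne_of_lt hv2
  have hne : D / (D - (1 - ρ) * v.2) ≠ 0 := by positivity
  refine ⟨hv2, ⟨?_, ?_⟩, ⟨?_, ?_⟩, ?_, ?_⟩
  · positivity
  · rw [div_lt_one hden]; nlinarith
  · rw [le_div_iff_of_neg hv2]; nlinarith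
  · rw [div_lt_iff_of_neg hv2]; nlinarith
  · have key : D / (D - (1 - ρ) * v.2) * 1 +
        (1 - D / (D - (1 - ρ) * v.2)) * ((D + ρ * v.2) / v.2) = ρ := by
      field_simp
      ring
    simp only [Prod.smul_mk, Prod.mk_add_mk, smul_eq_mul, smul_smul,
      mul_inv_cancel₀ hne, one_smul, smul_zero, add_zero]
    exact Prod.ext (by linarith [key]) rfl
  · have hdot : dot ((D / (D - (1 - ρ) * v.2))⁻¹ • v) ((D / (D - (1 - ρ) * v.2))⁻¹ • v)
        = ((D / (D - (1 - ρ) * v.2))⁻¹) ^ 2 * D := by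
      rw [hDdef]
      simp only [dot, Prod.smul_fst, Prod.smul_snd, smul_eq_mul]
      ring
    rw [hdot]
    field_simp
    ring
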